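/- Let n ≥ 4 and let R ≅ F₁ × ⋯ × Fₙ be a direct product of n fields. Then the set of all maximal ideals of R (i.e., the n ideals having the zero ideal in exactly one coordinate and the full field in all other coordinates) is a resolving set for the prime ideal sum graph PIS(R); in particular, the metric dimension of PIS(R) is at most n. -/

import Mathlib

open scoped Classical

/-- The vertex set of the prime ideal sum graph: nonzero proper ideals of `R`. -/
abbrev PISVertex (R : Type*) [CommRing R] := {I : Ideal R // I ≠ ⊥ ∧ I ≠ ⊤}

/-- The prime ideal sum graph of a commutative ring `R`: vertices are nonzero proper
ideals, and two distinct vertices `I`, `J` are adjacent iff `I + J` is a prime ideal. -/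
def PIS (R : Type*) [CommRing R] : SimpleGraph (PISVertex R) where
  Adj I J := I ≠ J ∧ (I.1 + J.1).IsPrime
  symm := ⟨fun I J h => ⟨h.1.symm, by rw [add_comm]; exact h.2⟩⟩
  loopless := ⟨fun I h => h.1 rfl⟩

/-- A set `S` of vertices is a resolving set if any two distinct vertices not both in `S`
are distinguished by the distance to some vertex of `S`. -/
def IsResolvingSet {V : Type*} (G : SimpleGraph V) (S : Set V) : Prop :=
  ∀ u v : V, u ≠ v → ¬(u ∈ S ∧ v ∈ S) → ∃ w ∈ S, G.dist u w ≠ G.dist v w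

/-- The metric dimension of a graph: the least cardinality of a resolving set. -/
noncomputable def metricDim {V : Type*} (G : SimpleGraph V) : ℕ∞ :=
  ⨅ S : {S : Set V // IsResolvingSet G S}, (S : Set V).encard



section Aux
variable {n : ℕ} {F : Fin n → Type*} [∀ i, Field (F i)]

def idl (F : Fin n → Type*) [∀ i, Field (F i)] (S : Set (Fin n)) : Ideal (∀ i, F i) where
  carrier := {x | ∀ i ∉ S, x i = 0}
  zero_mem' := fun i _ => rfl
  add_mem' := fun {a b} ha hb i hi => by simp [ha i hi, hb i hi]
  smul_mem' := fun c x hx i hi => by simp [hx i hi]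

theorem mem_idl {S : Set (Fin n)} {x : ∀ i, F i} : x ∈ idl F S ↔ ∀ i ∉ S, x i = 0 := Iff.rfl

def psupp (I : Ideal (∀ i, F i)) : Set (Fin n) := {i | ∃ x ∈ I, x i ≠ 0}

theorem idl_psupp (I : Ideal (∀ i, F i)) : idl F (psupp I) = I := by
  ext x
  constructor
  · intro hx
    have : x = ∑ i, Pi.single i (x i) := (Finset.univ_sum_single x).symm
    rw [this]
    refine Ideal.sum_mem _ fun i _ => ?_
    by_cases h : x i = 0
    · rw [h, Pi.single_zero]; exact zero_mem _
    · obtain ⟨y, hy, hyi⟩ : i ∈ psupp I := by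
        by_contra hns
        exact h (hx i hns)
      have : Pi.single i (x i * (y i)⁻¹) * y = Pi.single i (x i) := by
        ext j
        by_cases hj : j = i
        · subst hj; simp [mul_assoc, inv_mul_cancel₀ hyi]
        · simp [Pi.single_eq_of_ne hj]
      rw [← this]
      exact I.mul_mem_left _ hy
  · intro hx i hi
    by_contra h
    exact hi ⟨x, hx, h⟩

theorem psupp_idl (S : Set (Fin n)) : psupp (idl F S) = S := by
  ext i
  constructor
  · rintro ⟨x, hx, hxi⟩
    by_contra h
    exact hxi (hx i h)
  · intro hi
    refine ⟨Pi.single i 1, fun j hj => ?_, by simp⟩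
    have : j ≠ i := fun h => hj (h ▸ hi)
    simp [Pi.single_eq_of_ne this]

theorem idl_injective : Function.Injective (idl F (n := n)) := by
  intro S T h
  rw [← psupp_idl (F := F) S, h, psupp_idl]

theorem idl_empty : idl F (∅ : Set (Fin n)) = ⊥ := by
  ext x; simp [mem_idl, Ideal.mem_bot, funext_iff]

theorem idl_univ : idl F (Set.univ : Set (Fin n)) = ⊤ := by
  ext x; simp [mem_idl]

theorem idl_sup (S T : Set (Fin n)) : idl F S ⊔ idl F T = idl F (S ∪ T) := by
  apply le_antisymm
  · exact sup_le (fun x hx i hi => hx i (fun h => hi (Or.inl h)))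
      (fun x hx i hi => hx i (fun h => hi (Or.inr h)))
  · intro x hx
    have hy : (fun i => if i ∈ S then x i else 0) ∈ idl F S := by
      intro i hi; simp [hi]
    have hz : (fun i => if i ∈ S then 0 else x i) ∈ idl F T := by
      intro i hi
      by_cases h : i ∈ S
      · simp [h]
      · simp only [if_neg h]
        exact hx i (fun hm => hm.elim h hi)
    have : x = (fun i => if i ∈ S then x i else 0) + (fun i => if i ∈ S then 0 else x i) := by
      ext i; by_cases h : i ∈ S <;> simp [h]
    rw [this]
    exact Submodule.add_mem_sup hy hz

theorem idl_compl_singleton (i : Fin n) :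
    idl F ({i}ᶜ : Set (Fin n)) = RingHom.ker (Pi.evalRingHom F i) := by
  ext x
  simp only [mem_idl, RingHom.mem_ker, Pi.evalRingHom_apply]
  constructor
  · intro h; exact h i (by simp)
  · intro h j hj
    have : j = i := by simpa using hj
    rwa [this]

theorem isPrime_idl_iff {S : Set (Fin n)} : (idl F S).IsPrime ↔ ∃ i, S = {i}ᶜ := by
  constructor
  · intro hp
    have hS : S ≠ Set.univ := by
      intro h
      exact hp.ne_top (h ▸ idl_univ)
    obtain ⟨i, hi⟩ : ∃ i, i ∉ S := by
      by_contra h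
      push_neg at h
      exact hS (Set.eq_univ_of_forall h)
    refine ⟨i, ?_⟩
    ext j
    simp only [Set.mem_compl_iff, Set.mem_singleton_iff]
    constructor
    · intro hj h; exact hi (h ▸ hj)
    · intro hj
      by_contra hjS
      have hmul : (Pi.single i 1 : ∀ k, F k) * Pi.single j 1 ∈ idl F S := by
        have : (Pi.single i 1 : ∀ k, F k) * Pi.single j 1 = 0 := by
          ext k
          by_cases hk : k = i
          · subst hk; simp [Pi.single_eq_of_ne (Ne.symm hj)]
          · simp [Pi.single_eq_of_ne hk]
        rw [this]; exact zero_mem _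
      rcases hp.mem_or_mem hmul with h | h
      · have := h i hi
        rw [Pi.single_eq_same] at this
        exact one_ne_zero this
      · have := h j hjS
        rw [Pi.single_eq_same] at this
        exact one_ne_zero this
  · rintro ⟨i, rfl⟩
    rw [idl_compl_singleton]
    exact RingHom.ker_isPrime _

theorem isMaximal_idl_compl (i : Fin n) : (idl F ({i}ᶜ : Set (Fin n))).IsMaximal := by
  rw [idl_compl_singleton]
  exact RingHom.ker_isMaximal_of_surjective _ (fun y => ⟨Pi.single i y, by simp⟩)

end Aux


section Main
variable {R : Type*} [CommRing R] {n : ℕ} {F : Fin n → Type*} [∀ i, Field (F i)]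
  (e : R ≃+* ∀ i, F i)

noncomputable def sV (u : PISVertex R) : Set (Fin n) :=
  psupp (Ideal.map (e : R →+* ∀ i, F i) u.1)

theorem map_sV (u : PISVertex R) :
    Ideal.map (e : R →+* ∀ i, F i) u.1 = idl F (sV e u) := (idl_psupp _).symm

theorem comap_map_e (I : Ideal R) :
    Ideal.comap (e : R →+* ∀ i, F i) (Ideal.map (e : R →+* ∀ i, F i) I) = I :=
  Ideal.comap_map_of_bijective _ e.bijective

theorem map_comap_e (J : Ideal (∀ i, F i)) :
    Ideal.map (e : R →+* ∀ i, F i) (Ideal.comap (e : R →+* ∀ i, F i) J) = J :=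
  Ideal.map_comap_of_surjective _ e.surjective _

theorem sV_injective : Function.Injective (sV e (R := R)) := by
  intro u v h
  have h2 : Ideal.map (e : R →+* ∀ i, F i) u.1 = Ideal.map (e : R →+* ∀ i, F i) v.1 := by
    rw [map_sV e u, map_sV e v, h]
  have : u.1 = v.1 := by
    rw [← comap_map_e e u.1, h2, comap_map_e e v.1]
  exact Subtype.ext this

theorem isPrime_map_iff (I : Ideal R) :
    (Ideal.map (e : R →+* ∀ i, F i) I).IsPrime ↔ I.IsPrime := by
  constructor
  · intro h
    rw [← comap_map_e e I]
    exact Ideal.comap_isPrime _ _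
  · intro h
    rw [Ideal.map_comap_of_equiv e]
    exact Ideal.comap_isPrime _ _

theorem sV_ne_empty (u : PISVertex R) : sV e u ≠ ∅ := by
  intro h
  apply u.2.1
  have : Ideal.map (e : R →+* ∀ i, F i) u.1 = ⊥ := by
    rw [map_sV e u, h, idl_empty]
  exact (Ideal.map_eq_bot_iff_of_injective e.injective).mp this

theorem sV_ne_univ (u : PISVertex R) : sV e u ≠ Set.univ := by
  intro h
  apply u.2.2
  have : Ideal.map (e : R →+* ∀ i, F i) u.1 = ⊤ := by
    rw [map_sV e u, h, idl_univ]
  rw [← comap_map_e e u.1, this, Ideal.comap_top]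

theorem adj_iff (u v : PISVertex R) :
    (PIS R).Adj u v ↔ u ≠ v ∧ ∃ k, sV e u ∪ sV e v = ({k}ᶜ : Set (Fin n)) := by
  have hsum : Ideal.map (e : R →+* ∀ i, F i) (u.1 + v.1) = idl F (sV e u ∪ sV e v) := by
    rw [Submodule.add_eq_sup, Ideal.map_sup, map_sV e u, map_sV e v, idl_sup]
  constructor
  · rintro ⟨hne, hp⟩
    refine ⟨hne, ?_⟩
    rw [← isPrime_idl_iff (F := F), ← hsum]
    rwa [isPrime_map_iff]
  · rintro ⟨hne, k, hk⟩
    refine ⟨hne, ?_⟩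
    rw [← isPrime_map_iff e, hsum, isPrime_idl_iff]
    exact ⟨k, hk⟩

noncomputable def vert (S : Set (Fin n)) (h1 : S ≠ ∅) (h2 : S ≠ Set.univ) : PISVertex R := by
  refine ⟨Ideal.comap (e : R →+* ∀ i, F i) (idl F S), ?_, ?_⟩
  · intro h
    apply h1
    apply idl_injective (F := F)
    rw [← map_comap_e e (idl F S), h, Ideal.map_bot, idl_empty]
  · intro h
    apply h2
    apply idl_injective (F := F)
    rw [← map_comap_e e (idl F S), h, Ideal.map_top, idl_univ]

theorem sV_vert (S : Set (Fin n)) (h1 : S ≠ ∅) (h2 : S ≠ Set.univ) :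
    sV e (vert e S h1 h2) = S := by
  unfold sV vert
  rw [map_comap_e e (idl F S), psupp_idl]

end Main

section Dist
variable {R : Type*} [CommRing R] {n : ℕ} {F : Fin n → Type*} [∀ i, Field (F i)]

theorem exists_ne_ne (hn : 4 ≤ n) (i j : Fin n) : ∃ k : Fin n, k ≠ i ∧ k ≠ j := by
  by_contra h
  push_neg at h
  have hsub : (Finset.univ : Finset (Fin n)) ⊆ {i, j} := by
    intro k _
    rcases eq_or_ne k i with hk | hk
    · simp [hk]
    · simp [h k hk]
  have := Finset.card_le_card hsub
  have h2 : ({i, j} : Finset (Fin n)).card ≤ 2 := Finset.card_insert_le _ _ |>.trans (by simp)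
  simp [Finset.card_univ] at this
  omega

theorem compl_singleton_ne_empty (hn : 4 ≤ n) (i : Fin n) : ({i}ᶜ : Set (Fin n)) ≠ ∅ := by
  obtain ⟨k, hk, -⟩ := exists_ne_ne hn i i
  intro h
  have : k ∈ ({i}ᶜ : Set (Fin n)) := hk
  rw [h] at this
  exact this

theorem compl_singleton_ne_univ (i : Fin n) : ({i}ᶜ : Set (Fin n)) ≠ Set.univ := by
  intro h
  have : i ∈ ({i}ᶜ : Set (Fin n)) := h ▸ Set.mem_univ i
  exact this rfl

variable (e : R ≃+* ∀ i, F i)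

noncomputable def MV (hn : 4 ≤ n) (i : Fin n) : PISVertex R :=
  vert e ({i}ᶜ) (compl_singleton_ne_empty hn i) (compl_singleton_ne_univ i)

theorem sV_MV (hn : 4 ≤ n) (i : Fin n) : sV e (MV e hn i) = ({i}ᶜ : Set (Fin n)) :=
  sV_vert e _ _ _

theorem MV_isMaximal (hn : 4 ≤ n) (i : Fin n) : (MV e hn i).1.IsMaximal := by
  have : (idl F ({i}ᶜ : Set (Fin n))).IsMaximal := isMaximal_idl_compl i
  exact Ideal.comap_isMaximal_of_surjective _ e.surjective

theorem dist_le_one (u : PISVertex R) (hn : 4 ≤ n) {i : Fin n} (hi : i ∉ sV e u) :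
    (PIS R).dist u (MV e hn i) ≤ 1 := by
  by_cases h : u = MV e hn i
  · rw [h, SimpleGraph.dist_self]; omega
  · have hadj : (PIS R).Adj u (MV e hn i) := by
      rw [adj_iff e]
      refine ⟨h, i, ?_⟩
      rw [sV_MV]
      apply Set.union_eq_self_of_subset_left
      intro x hx
      simp only [Set.mem_compl_iff, Set.mem_singleton_iff]
      intro hxi
      exact hi (hxi ▸ hx)
    exact (SimpleGraph.dist_eq_one_iff_adj.mpr hadj).le

theorem dist_eq_two (u : PISVertex R) (hn : 4 ≤ n) {i : Fin n} (hi : i ∈ sV e u) :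
    (PIS R).dist u (MV e hn i) = 2 := by
  obtain ⟨j, hj⟩ : ∃ j, j ∉ sV e u := by
    by_contra h
    push_neg at h
    exact sV_ne_univ e u (Set.eq_univ_of_forall h)
  have hji : j ≠ i := fun h => hj (h ▸ hi)
  have h1 : ({i, j}ᶜ : Set (Fin n)) ≠ ∅ := by
    obtain ⟨k, hki, hkj⟩ := exists_ne_ne hn i j
    intro h
    have : k ∈ ({i, j}ᶜ : Set (Fin n)) := by simp [hki, hkj]
    rw [h] at this
    exact this
  have h2 : ({i, j}ᶜ : Set (Fin n)) ≠ Set.univ := by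
    intro h
    have : i ∈ ({i, j}ᶜ : Set (Fin n)) := h ▸ Set.mem_univ i
    simp at this
  set w : PISVertex R := vert e _ h1 h2 with hw
  have hsw : sV e w = ({i, j}ᶜ : Set (Fin n)) := sV_vert e _ _ _
  have hadj1 : (PIS R).Adj u w := by
    rw [adj_iff e]
    constructor
    · intro h
      rw [← h] at hsw
      have : i ∈ ({i, j}ᶜ : Set (Fin n)) := hsw ▸ hi
      simp at this
    · refine ⟨j, ?_⟩
      rw [hsw]
      ext k
      simp only [Set.mem_union, Set.mem_compl_iff, Set.mem_insert_iff, Set.mem_singleton_iff]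
      constructor
      · rintro (hk | hk)
        · intro hkj; exact hj (hkj ▸ hk)
        · intro hkj; exact hk (Or.inr hkj)
      · intro hk
        by_cases hki : k = i
        · exact Or.inl (hki ▸ hi)
        · exact Or.inr (fun hc => hc.elim hki hk)
  have hadj2 : (PIS R).Adj w (MV e hn i) := by
    rw [adj_iff e]
    constructor
    · intro h
      have : sV e w = sV e (MV e hn i) := by rw [h]
      rw [hsw, sV_MV] at this
      have hjmem : j ∈ ({i}ᶜ : Set (Fin n)) := hji
      rw [← this] at hjmem
      simp at hjmem
    · refine ⟨i, ?_⟩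
      rw [hsw, sV_MV]
      apply Set.union_eq_self_of_subset_left
      intro x hx
      simp only [Set.mem_compl_iff, Set.mem_insert_iff, Set.mem_singleton_iff] at hx ⊢
      exact fun h => hx (Or.inl h)
  have hwalk : (PIS R).Walk u (MV e hn i) :=
    SimpleGraph.Walk.cons hadj1 (SimpleGraph.Walk.cons hadj2 SimpleGraph.Walk.nil)
  have hle : (PIS R).dist u (MV e hn i) ≤ 2 :=
    SimpleGraph.dist_le (SimpleGraph.Walk.cons hadj1
      (SimpleGraph.Walk.cons hadj2 SimpleGraph.Walk.nil))
  have hne0 : (PIS R).dist u (MV e hn i) ≠ 0 := by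
    intro h
    have hr : (PIS R).Reachable u (MV e hn i) := ⟨hwalk⟩
    have : u = MV e hn i := (hr.dist_eq_zero_iff).mp h
    rw [this] at hi
    rw [sV_MV] at hi
    simp at hi
  have hne1 : (PIS R).dist u (MV e hn i) ≠ 1 := by
    intro h
    have hadj := SimpleGraph.dist_eq_one_iff_adj.mp h
    rw [adj_iff e] at hadj
    obtain ⟨-, k, hk⟩ := hadj
    rw [sV_MV] at hk
    have huniv : sV e u ∪ ({i}ᶜ : Set (Fin n)) = Set.univ := by
      ext x
      simp only [Set.mem_union, Set.mem_compl_iff, Set.mem_singleton_iff, Set.mem_univ,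
        iff_true]
      by_cases hx : x = i
      · exact Or.inl (hx ▸ hi)
      · exact Or.inr hx
    rw [huniv] at hk
    exact compl_singleton_ne_univ k hk.symm
  omega

end Dist

/-- If `R` is isomorphic to a direct product of `n ≥ 4` fields, then the set of all
maximal ideals of `R` is a resolving set for `PIS R`; in particular the metric
dimension of `PIS R` is at most `n`. -/
theorem maximalIdeals_resolving_PIS_n_fields {R : Type*} [CommRing R] {n : ℕ} (hn : 4 ≤ n)
    (F : Fin n → Type*) [∀ i, Field (F i)] (e : R ≃+* ∀ i, F i) :
    IsResolvingSet (PIS R) {I : PISVertex R | I.1.IsMaximal} ∧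
      metricDim (PIS R) ≤ n := by
  have hres : IsResolvingSet (PIS R) {I : PISVertex R | I.1.IsMaximal} := by
    intro u v huv _
    have hsne : sV e u ≠ sV e v := fun h => huv (sV_injective e h)
    have hex : ∃ i, (i ∈ sV e u ∧ i ∉ sV e v) ∨ (i ∈ sV e v ∧ i ∉ sV e u) := by
      by_contra h
      push_neg at h
      apply hsne
      ext i
      have := h i
      tauto
    obtain ⟨i, hcase⟩ := hex
    refine ⟨MV e hn i, MV_isMaximal e hn i, ?_⟩
    rcases hcase with ⟨hu, hv⟩ | ⟨hv, hu⟩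
    · have d1 := dist_eq_two e u hn hu
      have d2 := dist_le_one e v hn hv
      omega
    · have d1 := dist_eq_two e v hn hv
      have d2 := dist_le_one e u hn hu
      omega
  refine ⟨hres, ?_⟩
  have hle : metricDim (PIS R) ≤ ({I : PISVertex R | I.1.IsMaximal}).encard :=
    iInf_le _ (⟨_, hres⟩ : {S : Set (PISVertex R) // IsResolvingSet (PIS R) S})
  refine hle.trans ?_
  have hnpos : 0 < n := by omega
  set f : PISVertex R → Fin n := fun I =>
    if h : ∃ i, sV e I = ({i}ᶜ : Set (Fin n)) then h.choose else ⟨0, hnpos⟩ with hf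
  have hkey : ∀ I : PISVertex R, I.1.IsMaximal → sV e I = ({f I}ᶜ : Set (Fin n)) := by
    intro I hI
    have hprime : (idl F (sV e I)).IsPrime := by
      rw [← map_sV e I, isPrime_map_iff]
      exact hI.isPrime
    have hex : ∃ i, sV e I = ({i}ᶜ : Set (Fin n)) := isPrime_idl_iff.mp hprime
    simp only [hf]
    rw [dif_pos hex]
    exact hex.choose_spec
  have hinj : Set.InjOn f {I : PISVertex R | I.1.IsMaximal} := by
    intro I hI J hJ h
    apply sV_injective e
    rw [hkey I hI, hkey J hJ, h]
  calc ({I : PISVertex R | I.1.IsMaximal}).encard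
      = (f '' {I : PISVertex R | I.1.IsMaximal}).encard := (hinj.encard_image).symm
    _ ≤ (Set.univ : Set (Fin n)).encard := Set.encard_le_encard (Set.subset_univ _)
    _ = n := by simp [Set.encard_univ]
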